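/- Let h ∈ (0,1), C > 0, p > 0, q ≥ 0, 0 < β < α < 1 with β = ((1+2h)/3)p − (1−h)q, and c₁ = β/(2C). Define φ₀(u,v,z) = r^p z^q and φ₁(u,v,z) = (r^p z^q/(C^{-2}+1)^{β/2})|r/v|^{β} + c₁ r^p z^q |r/v|^{β} ∫_{u/|v|}^{1/C}(t²+1)^{(α−β−1)/2} dt, with r = √(u²+v²). Then for all sufficiently large C (depending only on h and the exponents), at every point of the interface {u = |v|/C, v ≠ 0, z > 0} one has ∂ᵤφ₀ − ∂ᵤφ₁ ≤ 0. -/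

import Mathlib

open Real

noncomputable def pdu (f : ℝ → ℝ → ℝ → ℝ) : ℝ → ℝ → ℝ → ℝ :=
  fun u v z => deriv (fun u' => f u' v z) u

set_option maxHeartbeats 2000000 in
/-- Boundary-flux estimate on the interface `{u = |v|/C}` between regions `R₀` and `R₁`:
for all sufficiently large `C`, `∂ᵤφ₀ − ∂ᵤφ₁ ≤ 0` there, where `c₁ = β/(2C)`. -/
theorem flux_R0_R1 (h p q α β : ℝ)
    (hh : h ∈ Set.Ioo (0:ℝ) 1) (hp : 0 < p) (hq : 0 ≤ q)
    (hβ : 0 < β) (hβα : β < α) (hα : α < 1)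
    (hrel : β = ((1 + 2*h)/3) * p - (1 - h) * q) :
    ∃ C₀ > (0:ℝ), ∀ C ≥ C₀, ∀ v z : ℝ, v ≠ 0 → 0 < z →
      pdu (fun u v z => (Real.sqrt (u ^ 2 + v ^ 2)) ^ p * z ^ q) (|v| / C) v z
        - pdu (fun u v z =>
            (Real.sqrt (u ^ 2 + v ^ 2)) ^ p * z ^ q / (1/C ^ 2 + 1) ^ (β/2)
                * |Real.sqrt (u ^ 2 + v ^ 2) / v| ^ β
              + (β / (2*C)) * (Real.sqrt (u ^ 2 + v ^ 2)) ^ p * z ^ q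
                * |Real.sqrt (u ^ 2 + v ^ 2) / v| ^ β
                * ∫ t in (u / |v|)..(1/C), (t ^ 2 + 1) ^ ((α - β - 1)/2))
            (|v| / C) v z ≤ 0 := by
  refine ⟨1, one_pos, fun C hC v z hv hz => ?_⟩
  have hC0 : (0:ℝ) < C := lt_of_lt_of_le one_pos hC
  have hw0 : 0 < |v| := abs_pos.mpr hv
  set w := |v| with hwdef
  set u₀ := w / C with hu0def
  have hu0 : 0 < u₀ := div_pos hw0 hC0
  set cc : ℝ := 1/C^2 + 1 with hccdef
  have hccpos : 0 < cc := by rw [hccdef]; positivity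
  set D : ℝ := u₀^2 + v^2 with hDdef
  have hv2 : 0 < v^2 := by positivity
  have hDpos : 0 < D := by rw [hDdef]; positivity
  have hDval : D = w^2 * cc := by
    rw [hDdef, hu0def, hccdef, ← sq_abs v, ← hwdef]
    field_simp
  have hXpos : ∀ u : ℝ, 0 < u^2 + v^2 := fun u => by positivity
  -- derivative of the inner function u ↦ u² + v²
  have hinner : HasDerivAt (fun u : ℝ => u^2 + v^2) (2*u₀) u₀ := by
    simpa using (hasDerivAt_pow 2 u₀).add_const (v^2)
  have hP : ∀ s : ℝ, HasDerivAt (fun u : ℝ => (u^2+v^2) ^ (s/2 : ℝ))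
      (2*u₀ * (s/2) * D ^ (s/2 - 1 : ℝ)) u₀ :=
    fun s => hinner.rpow_const (Or.inl hDpos.ne')
  -- rewrite φ₀
  have ef0 : (fun u' : ℝ => Real.sqrt (u' ^ 2 + v ^ 2) ^ p * z ^ q)
      = (fun u' : ℝ => (u' ^ 2 + v ^ 2) ^ (p/2 : ℝ) * z ^ q) := by
    funext u
    rw [Real.sqrt_eq_rpow, ← Real.rpow_mul (hXpos u).le,
      show (1:ℝ)/2 * p = p/2 by ring]
  -- constants
  have hccβ : (0:ℝ) < cc ^ (β/2 : ℝ) := Real.rpow_pos_of_pos hccpos _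
  have hwβ : (0:ℝ) < w ^ (β : ℝ) := Real.rpow_pos_of_pos hw0 _
  -- rewrite φ₁
  have ef1 : (fun u' : ℝ =>
        Real.sqrt (u' ^ 2 + v ^ 2) ^ p * z ^ q / cc ^ (β/2)
            * |Real.sqrt (u' ^ 2 + v ^ 2) / v| ^ β
          + β / (2*C) * Real.sqrt (u' ^ 2 + v ^ 2) ^ p * z ^ q
            * |Real.sqrt (u' ^ 2 + v ^ 2) / v| ^ β
            * ∫ t in (u' / w)..(1/C), (t ^ 2 + 1) ^ ((α - β - 1)/2))
      = (fun u' : ℝ =>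
          (z^q / (cc ^ (β/2 : ℝ) * w ^ (β:ℝ))) * (u' ^ 2 + v ^ 2) ^ ((p+β)/2 : ℝ)
          + (β / (2*C) * z^q / w ^ (β:ℝ)) * ((u' ^ 2 + v ^ 2) ^ ((p+β)/2 : ℝ)
              * ∫ t in (u' / w)..(1/C), (t ^ 2 + 1) ^ ((α - β - 1)/2))) := by
    funext u
    have hXu := hXpos u
    rw [Real.sqrt_eq_rpow, abs_div, abs_of_nonneg (Real.rpow_nonneg hXu.le _), ← hwdef,
      Real.div_rpow (Real.rpow_nonneg hXu.le _) hw0.le,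
      ← Real.rpow_mul hXu.le, ← Real.rpow_mul hXu.le,
      show (p+β)/2 = (1:ℝ)/2*p + (1:ℝ)/2*β by ring, Real.rpow_add hXu]
    field_simp
  -- FTC part
  have hgcont : Continuous (fun t : ℝ => (t ^ 2 + 1) ^ ((α - β - 1)/2)) := by
    apply Continuous.rpow_const (by continuity)
    intro x; left; positivity
  have hJ0 : HasDerivAt (fun x : ℝ => ∫ t in x..(1/C), (t ^ 2 + 1) ^ ((α - β - 1)/2))
      (-(((1/C) ^ 2 + 1) ^ ((α - β - 1)/2))) (1/C) :=
    intervalIntegral.integral_hasDerivAt_left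
      (hgcont.intervalIntegrable _ _)
      hgcont.aestronglyMeasurable.stronglyMeasurableAtFilter
      hgcont.continuousAt
  have hu0w : u₀ / w = 1/C := by
    rw [hu0def]; field_simp
  have hJ0' : HasDerivAt (fun x : ℝ => ∫ t in x..(1/C), (t ^ 2 + 1) ^ ((α - β - 1)/2))
      (-(((1/C) ^ 2 + 1) ^ ((α - β - 1)/2))) (u₀ / w) := by
    rw [hu0w]; exact hJ0
  have hdiv : HasDerivAt (fun u : ℝ => u / w) (1/w) u₀ := by
    simpa using (hasDerivAt_id u₀).div_const w
  have hJ : HasDerivAt (fun u : ℝ => ∫ t in (u / w)..(1/C), (t ^ 2 + 1) ^ ((α - β - 1)/2))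
      (-(((1/C) ^ 2 + 1) ^ ((α - β - 1)/2)) * (1/w)) u₀ := by
    exact hJ0'.comp u₀ hdiv
  have hg1C : ((1/C : ℝ) ^ 2 + 1) ^ ((α - β - 1)/2) = cc ^ ((α - β - 1)/2 : ℝ) := by
    rw [hccdef, div_pow, one_pow]
  rw [hg1C] at hJ
  -- derivative of φ₁ (rewritten form)
  have h1der : HasDerivAt (fun u' : ℝ =>
        (z^q / (cc ^ (β/2 : ℝ) * w ^ (β:ℝ))) * (u' ^ 2 + v ^ 2) ^ ((p+β)/2 : ℝ)
          + (β / (2*C) * z^q / w ^ (β:ℝ)) * ((u' ^ 2 + v ^ 2) ^ ((p+β)/2 : ℝ)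
              * ∫ t in (u' / w)..(1/C), (t ^ 2 + 1) ^ ((α - β - 1)/2)))
      ((z^q / (cc ^ (β/2 : ℝ) * w ^ (β:ℝ))) * (2*u₀ * ((p+β)/2) * D ^ ((p+β)/2 - 1 : ℝ))
        + (β / (2*C) * z^q / w ^ (β:ℝ)) *
            ((2*u₀ * ((p+β)/2) * D ^ ((p+β)/2 - 1 : ℝ))
                * (∫ t in (u₀ / w)..(1/C), (t ^ 2 + 1) ^ ((α - β - 1)/2))
              + D ^ ((p+β)/2 : ℝ) * (-(cc ^ ((α - β - 1)/2 : ℝ)) * (1/w)))) u₀ :=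
    ((hP (p+β)).const_mul _).add (((hP (p+β)).mul hJ).const_mul _)
  rw [hu0w, intervalIntegral.integral_same] at h1der
  -- compute both derivatives in the goal
  simp only [pdu]
  rw [ef0, ((hP p).mul_const (z^q)).deriv, ef1, h1der.deriv]
  clear_value w u₀ cc D
  -- algebraic identities for powers of D and cc
  have hDβ2 : D ^ (β/2 : ℝ) = w ^ (β:ℝ) * cc ^ (β/2 : ℝ) := by
    rw [hDval, Real.mul_rpow (by positivity) hccpos.le]
    congr 1
    rw [← Real.rpow_natCast w 2, ← Real.rpow_mul hw0.le,
      show ((2:ℕ):ℝ) * (β/2) = β by push_cast; ring]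
  have hDs1 : D ^ ((p+β)/2 - 1 : ℝ) = D ^ (p/2 - 1 : ℝ) * (w ^ (β:ℝ) * cc ^ (β/2 : ℝ)) := by
    rw [show (p+β)/2 - 1 = (p/2 - 1) + β/2 by ring, Real.rpow_add hDpos, hDβ2]
  have hDs : D ^ ((p+β)/2 : ℝ) = D ^ (p/2 - 1 : ℝ) * (w ^ (β:ℝ) * cc ^ (β/2 : ℝ)) * D := by
    rw [show (p+β)/2 = ((p+β)/2 - 1) + 1 by ring, Real.rpow_add hDpos, Real.rpow_one, hDs1]
  have hccA : cc ^ (β/2 : ℝ) * cc * cc ^ ((α - β - 1)/2 : ℝ) = cc ^ ((α+1)/2 : ℝ) := by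
    rw [show (α+1)/2 = (β/2 + 1) + (α - β - 1)/2 by ring, Real.rpow_add hccpos,
      Real.rpow_add hccpos, Real.rpow_one]
  have key : 2*u₀*(p/2)*D ^ (p/2 - 1 : ℝ) * z^q
      - ((z^q / (cc ^ (β/2 : ℝ) * w ^ (β:ℝ))) * (2*u₀ * ((p+β)/2) * D ^ ((p+β)/2 - 1 : ℝ))
        + (β / (2*C) * z^q / w ^ (β:ℝ)) *
            ((2*u₀ * ((p+β)/2) * D ^ ((p+β)/2 - 1 : ℝ)) * 0
              + D ^ ((p+β)/2 : ℝ) * (-(cc ^ ((α - β - 1)/2 : ℝ)) * (1/w))))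
      = z^q * D ^ (p/2 - 1 : ℝ) * ((β/(2*C)) * w * cc ^ ((α+1)/2 : ℝ) - β * u₀) := by
    rw [hDs1, hDs, ← hccA, hDval]
    rw [mul_zero, zero_add]
    field_simp [hccβ.ne', hwβ.ne', hw0.ne', hC0.ne']
    ring
  rw [key]
  -- final inequality
  have hcc2 : cc ≤ 2 := by
    have h1 : (1:ℝ) ≤ C^2 := by nlinarith
    have h2 : 1/C^2 ≤ 1 := by
      rw [div_le_one (by positivity)]; exact h1
    rw [hccdef]; linarith
  have h6 : cc ^ ((α+1)/2 : ℝ) ≤ 2 := by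
    calc cc ^ ((α+1)/2 : ℝ) ≤ (2:ℝ) ^ ((α+1)/2 : ℝ) :=
          Real.rpow_le_rpow hccpos.le hcc2 (by linarith)
      _ ≤ (2:ℝ) ^ (1:ℝ) :=
          Real.rpow_le_rpow_of_exponent_le one_le_two (by linarith)
      _ = 2 := Real.rpow_one 2
  have h7 : (β/(2*C)) * w * cc ^ ((α+1)/2 : ℝ) ≤ (β/(2*C)) * w * 2 := by
    apply mul_le_mul_of_nonneg_left h6 (by positivity)
  have h8 : (β/(2*C)) * w * 2 = β * u₀ := by
    rw [hu0def]; field_simp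
  have hT : (β/(2*C)) * w * cc ^ ((α+1)/2 : ℝ) - β * u₀ ≤ 0 := by linarith
  have hzD : 0 ≤ z^q * D ^ (p/2 - 1 : ℝ) := by positivity
  exact mul_nonpos_of_nonneg_of_nonpos hzD hT
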